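/- Let f, g be probability measures on ℝ with finite second moments, let (X,Y) be an optimal W₂ coupling of (f,g), and let θ be uniform on [0,2π) independent of (X,Y). Define f' = Law(X cos θ − Z sin θ) and g' = Law(Y cos θ − Z sin θ) for a further independent random variable Z with law γ. Then W₂²(f', g') ≤ (1/2) W₂²(f, g). -/

import Mathlib

open MeasureTheory Real

/-- The uniform probability measure on `[0, 2π)`. -/
noncomputable def thetaUnif : Measure ℝ :=
  (ENNReal.ofReal (2 * π))⁻¹ • (volume.restrict (Set.Ico 0 (2 * π)))

/-- The Kac collision map: `B[ν₁,ν₂]` is the law of `X cos θ + Y sin θ`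
where `X ~ ν₁`, `Y ~ ν₂` and `θ` is uniform on `[0,2π)`, all independent. -/
noncomputable def collB (ν₁ ν₂ : Measure ℝ) : Measure ℝ :=
  Measure.map (fun p : ℝ × ℝ × ℝ => p.1 * Real.cos p.2.2 + p.2.1 * Real.sin p.2.2)
    (ν₁.prod (ν₂.prod thetaUnif))

/-- Squared 2-Wasserstein distance on probability measures on `ℝ`,
defined as the infimum of the quadratic transport cost over couplings. -/
noncomputable def W2sq (f g : Measure ℝ) : ℝ :=
  sInf { c : ℝ | ∃ μ : Measure (ℝ × ℝ), IsProbabilityMeasure μ ∧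
    μ.map Prod.fst = f ∧ μ.map Prod.snd = g ∧ c = ∫ p, (p.1 - p.2) ^ 2 ∂μ }

lemma thetaUnif_cos_sq : ∫ x, Real.cos x ^ 2 ∂thetaUnif = 1 / 2 := by
  have h2π : (0:ℝ) < 2 * π := by positivity
  rw [thetaUnif, integral_smul_measure,
    Measure.restrict_congr_set MeasureTheory.Ico_ae_eq_Ioc,
    ← intervalIntegral.integral_of_le h2π.le, integral_cos_sq]
  simp only [Real.cos_two_pi, Real.sin_two_pi, Real.cos_zero, Real.sin_zero]
  rw [ENNReal.toReal_inv, ENNReal.toReal_ofReal h2π.le]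
  rw [smul_eq_mul]
  field_simp
  ring

open ProbabilityTheory in
theorem thermostat_W2_contraction
    {Ω : Type*} [MeasurableSpace Ω] (P : Measure Ω) [IsProbabilityMeasure P]
    (f g γ : Measure ℝ) [IsProbabilityMeasure f] [IsProbabilityMeasure g]
    [IsProbabilityMeasure γ]
    (hf2 : Integrable (fun x : ℝ => x ^ 2) f) (hg2 : Integrable (fun x : ℝ => x ^ 2) g)
    (hγ2 : Integrable (fun x : ℝ => x ^ 2) γ)
    (X Y Z Θ : Ω → ℝ) (hX : Measurable X) (hY : Measurable Y)
    (hZ : Measurable Z) (hΘ : Measurable Θ)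
    (hlawX : P.map X = f) (hlawY : P.map Y = g)
    (hlawZ : P.map Z = γ) (hlawΘ : P.map Θ = thetaUnif)
    (hopt : ∫ ω, (X ω - Y ω) ^ 2 ∂P = W2sq f g)
    (hindep : IndepFun (fun ω => (X ω, Y ω)) (fun ω => (Z ω, Θ ω)) P)
    (hZΘ : IndepFun Z Θ P) :
    W2sq (P.map (fun ω => X ω * Real.cos (Θ ω) - Z ω * Real.sin (Θ ω)))
        (P.map (fun ω => Y ω * Real.cos (Θ ω) - Z ω * Real.sin (Θ ω)))
      ≤ (1 / 2) * W2sq f g := by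
  set u : Ω → ℝ := fun ω => X ω * Real.cos (Θ ω) - Z ω * Real.sin (Θ ω) with hu_def
  set v : Ω → ℝ := fun ω => Y ω * Real.cos (Θ ω) - Z ω * Real.sin (Θ ω) with hv_def
  have hu : Measurable u :=
    (hX.mul (Real.measurable_cos.comp hΘ)).sub (hZ.mul (Real.measurable_sin.comp hΘ))
  have hv : Measurable v :=
    (hY.mul (Real.measurable_cos.comp hΘ)).sub (hZ.mul (Real.measurable_sin.comp hΘ))
  have hUV : Measurable (fun ω => (u ω, v ω)) := hu.prodMk hv
  set μ : Measure (ℝ × ℝ) := P.map (fun ω => (u ω, v ω)) with hμ_def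
  have hμprob : IsProbabilityMeasure μ := Measure.isProbabilityMeasure_map hUV.aemeasurable
  have hfst : μ.map Prod.fst = P.map u := by
    rw [hμ_def, Measure.map_map measurable_fst hUV]; rfl
  have hsnd : μ.map Prod.snd = P.map v := by
    rw [hμ_def, Measure.map_map measurable_snd hUV]; rfl
  have hcont : Continuous (fun p : ℝ × ℝ => (p.1 - p.2) ^ 2) := by continuity
  have hcost : ∫ p, (p.1 - p.2) ^ 2 ∂μ
      = ∫ ω, ((X ω - Y ω) * Real.cos (Θ ω)) ^ 2 ∂P := by
    rw [hμ_def, integral_map hUV.aemeasurable hcont.aestronglyMeasurable]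
    refine integral_congr_ae (Filter.Eventually.of_forall fun ω => ?_)
    simp only [hu_def, hv_def]; ring
  set c : ℝ := ∫ ω, ((X ω - Y ω) * Real.cos (Θ ω)) ^ 2 ∂P with hc_def
  have hmem : c ∈ { c : ℝ | ∃ μ : Measure (ℝ × ℝ), IsProbabilityMeasure μ ∧
      μ.map Prod.fst = P.map u ∧ μ.map Prod.snd = P.map v ∧
      c = ∫ p, (p.1 - p.2) ^ 2 ∂μ } :=
    ⟨μ, hμprob, hfst, hsnd, hcost.symm⟩
  have hbdd : BddBelow { c : ℝ | ∃ μ : Measure (ℝ × ℝ), IsProbabilityMeasure μ ∧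
      μ.map Prod.fst = P.map u ∧ μ.map Prod.snd = P.map v ∧
      c = ∫ p, (p.1 - p.2) ^ 2 ∂μ } := by
    refine ⟨0, fun a ha => ?_⟩
    obtain ⟨ν, _, _, _, hc⟩ := ha
    exact hc ▸ integral_nonneg fun p => sq_nonneg _
  have hle : W2sq (P.map u) (P.map v) ≤ c := csInf_le hbdd hmem
  -- now compute c = (1/2) * W2sq f g
  have hindep2 : IndepFun (fun ω => (X ω - Y ω) ^ 2) (fun ω => Real.cos (Θ ω) ^ 2) P := by
    have := hindep.comp (φ := fun p : ℝ × ℝ => (p.1 - p.2) ^ 2)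
      (ψ := fun q : ℝ × ℝ => Real.cos q.2 ^ 2)
      ((measurable_fst.sub measurable_snd).pow_const 2)
      ((Real.measurable_cos.comp measurable_snd).pow_const 2)
    exact this
  have hmul : c = (∫ ω, (X ω - Y ω) ^ 2 ∂P) * ∫ ω, Real.cos (Θ ω) ^ 2 ∂P := by
    rw [hc_def]
    have : (∫ ω, ((X ω - Y ω) * Real.cos (Θ ω)) ^ 2 ∂P)
        = ∫ ω, ((X ω - Y ω) ^ 2) * (Real.cos (Θ ω) ^ 2) ∂P := by
      refine integral_congr_ae (Filter.Eventually.of_forall fun ω => ?_); ring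
    rw [this]
    exact ProbabilityTheory.IndepFun.integral_fun_mul_eq_mul_integral hindep2
      (((hX.sub hY).pow_const 2).aestronglyMeasurable)
      (((Real.measurable_cos.comp hΘ).pow_const 2).aestronglyMeasurable)
  have hcosint : ∫ ω, Real.cos (Θ ω) ^ 2 ∂P = 1 / 2 := by
    have : ∫ ω, Real.cos (Θ ω) ^ 2 ∂P = ∫ x, Real.cos x ^ 2 ∂(P.map Θ) := by
      rw [integral_map hΘ.aemeasurable]
      exact (Real.continuous_cos.pow 2).aestronglyMeasurable
    rw [this, hlawΘ, thetaUnif_cos_sq]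
  calc W2sq (P.map u) (P.map v) ≤ c := hle
    _ = (1 / 2) * W2sq f g := by rw [hmul, hopt, hcosint]; ring
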